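/- For a finite-dimensional unimodular pivotal Hopf algebra (H, g) with two-sided cointegral c normalized so that μ(c) = 1, and for f ∈ End_H(H) the right multiplication by x = f(1), the quantum trace tr_H(l_g ∘ f) (the ordinary trace of left multiplication by g composed with f on H) equals ε(c)·μ_g(x), where μ_g(x) = μ(gx) is the symmetrised right integral. In particular the quantum trace on the regular representation vanishes identically if and only if H is not semisimple. -/

import Mathlib

open TensorProduct

namespace Stmt18Aux

open Coalgebra HopfAlgebra LinearMap

variable {k H : Type} [Field k] [Ring H] [HopfAlgebra k H]

/-- Product of two comultiplication representations. -/
noncomputable def reprMul {ι₁ ι₂ : Type} {a b : H} (r1 : Coalgebra.Repr k a ι₁)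
    (r2 : Coalgebra.Repr k b ι₂) :
    Coalgebra.Repr k (a * b) (ι₁ × ι₂) where
  index := r1.index ×ˢ r2.index
  left := fun p => r1.left p.1 * r2.left p.2
  right := fun p => r1.right p.1 * r2.right p.2
  eq := by
    rw [Bialgebra.comul_mul, ← r1.eq, ← r2.eq, Finset.sum_mul_sum, Finset.sum_product]
    simp [Algebra.TensorProduct.tmul_mul_tmul]

lemma sum_counit_smul {ι : Type} {a : H} (r : Coalgebra.Repr k a ι) :
    ∑ i ∈ r.index, counit (R := k) (r.left i) • r.right i = a := by
  calc ∑ i ∈ r.index, counit (R := k) (r.left i) • r.right i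
      = TensorProduct.lid k H (∑ i ∈ r.index, counit (R := k) (r.left i) ⊗ₜ[k] r.right i) := by
        rw [map_sum]; simp
    _ = TensorProduct.lid k H ((1:k) ⊗ₜ[k] a) := by rw [Coalgebra.sum_counit_tmul_eq r]
    _ = a := by simp

lemma sum_smul_counit {ι : Type} {a : H} (r : Coalgebra.Repr k a ι) :
    ∑ i ∈ r.index, counit (R := k) (r.right i) • r.left i = a := by
  calc ∑ i ∈ r.index, counit (R := k) (r.right i) • r.left i
      = TensorProduct.rid k H (∑ i ∈ r.index, r.left i ⊗ₜ[k] counit (R := k) (r.right i)) := by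
        rw [map_sum]; simp
    _ = TensorProduct.rid k H (a ⊗ₜ[k] (1:k)) := by rw [Coalgebra.sum_tmul_counit_eq r]
    _ = a := by simp

lemma triple_transport {V : Type} [AddCommGroup V] [Module k V]
    (F : H ⊗[k] (H ⊗[k] H) →ₗ[k] V) {ι ι₁ ι₂ : Type} {a : H} (r : Coalgebra.Repr k a ι)
    (r1 : (i : ι) → Coalgebra.Repr k (r.left i) ι₁)
    (r2 : (i : ι) → Coalgebra.Repr k (r.right i) ι₂) :
    ∑ i ∈ r.index, ∑ j ∈ (r1 i).index,
      F ((r1 i).left j ⊗ₜ[k] ((r1 i).right j ⊗ₜ[k] r.right i))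
      = ∑ i ∈ r.index, ∑ j ∈ (r2 i).index,
      F (r.left i ⊗ₜ[k] ((r2 i).left j ⊗ₜ[k] (r2 i).right j)) := by
  have h := congrArg F (Coalgebra.sum_tmul_tmul_eq r r1 r2)
  simpa [map_sum] using h


lemma star (μ : H →ₗ[k] k)
    (hμ : ∀ x : H,
      TensorProduct.lid k H (LinearMap.rTensor H μ (Coalgebra.comul x)) = μ x • (1 : H))
    {c : H} (hcr : ∀ x : H, c * x = Coalgebra.counit (R := k) x • c) (hμc : μ c = 1)
    {ιc ιw : Type} (rc : Coalgebra.Repr k c ιc) {w : H} (rw : Coalgebra.Repr k w ιw) :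
    ∑ i ∈ rc.index, ∑ j ∈ rw.index,
      μ (rc.left i * rw.left j) • (rc.right i * rw.right j)
      = counit (R := k) w • (1 : H) := by
  have h := hμ (c * w)
  rw [← (reprMul rc rw).eq] at h
  have h2 : μ (c * w) = counit (R := k) w := by
    rw [hcr, map_smul, hμc, smul_eq_mul, mul_one]
  rw [h2] at h
  simp only [map_sum, rTensor_tmul, lid_tmul, reprMul] at h
  rw [Finset.sum_product] at h
  exact h


lemma claimA (μ : H →ₗ[k] k)
    (hμ : ∀ x : H,
      TensorProduct.lid k H (LinearMap.rTensor H μ (Coalgebra.comul x)) = μ x • (1 : H))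
    {c : H} (hcr : ∀ x : H, c * x = Coalgebra.counit (R := k) x • c) (hμc : μ c = 1)
    {ιc : Type} (rc : Coalgebra.Repr k c ιc) (y : H) :
    ∑ i ∈ rc.index, μ (rc.left i * y) • rc.right i = antipode (R := k) y := by
  classical
  set S : H →ₗ[k] H := antipode (R := k) (A := H) with hSdef
  let ry : Coalgebra.Repr k y (H × H) := ℛ k y
  let rl : ∀ j : ry.ι, Coalgebra.Repr k (ry.left j) (H × H) := fun j => ℛ k (ry.left j)
  let rr : ∀ j : ry.ι, Coalgebra.Repr k (ry.right j) (H × H) := fun j => ℛ k (ry.right j)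
  let B : H ⊗[k] H →ₗ[k] H :=
    ∑ i ∈ rc.index, mulLeft k (rc.right i) ∘ₗ (TensorProduct.lid k H).toLinearMap
      ∘ₗ rTensor H (μ ∘ₗ mulLeft k (rc.left i))
  have hB : ∀ u v : H, B (u ⊗ₜ[k] v)
      = ∑ i ∈ rc.index, μ (rc.left i * u) • (rc.right i * v) := by
    intro u v
    simp [B, LinearMap.sum_apply, mul_smul_comm]
  let F : H ⊗[k] (H ⊗[k] H) →ₗ[k] H := B ∘ₗ lTensor H (LinearMap.mul' k H ∘ₗ lTensor H S)
  have hF : ∀ x u z : H, F (x ⊗ₜ[k] (u ⊗ₜ[k] z))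
      = ∑ i ∈ rc.index, μ (rc.left i * x) • (rc.right i * (u * S z)) := by
    intro x u z
    simp only [F, LinearMap.coe_comp, Function.comp_apply, lTensor_tmul, mul'_apply]
    exact hB _ _
  have key := triple_transport F ry rl rr
  have lhs : ∑ j ∈ ry.index, ∑ l ∈ (rl j).index,
      F ((rl j).left l ⊗ₜ[k] ((rl j).right l ⊗ₜ[k] ry.right j)) = S y := by
    have e1 : ∀ j ∈ ry.index, ∑ l ∈ (rl j).index,
        F ((rl j).left l ⊗ₜ[k] ((rl j).right l ⊗ₜ[k] ry.right j))
        = counit (R := k) (ry.left j) • S (ry.right j) := by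
      intro j _
      calc ∑ l ∈ (rl j).index, F ((rl j).left l ⊗ₜ[k] ((rl j).right l ⊗ₜ[k] ry.right j))
          = (∑ l ∈ (rl j).index, ∑ i ∈ rc.index,
              μ (rc.left i * (rl j).left l) • (rc.right i * (rl j).right l)) * S (ry.right j) := by
            rw [Finset.sum_mul]
            refine Finset.sum_congr rfl fun l _ => ?_
            rw [hF, Finset.sum_mul]
            refine Finset.sum_congr rfl fun i _ => ?_
            rw [smul_mul_assoc, mul_assoc]
        _ = (∑ i ∈ rc.index, ∑ l ∈ (rl j).index,
              μ (rc.left i * (rl j).left l) • (rc.right i * (rl j).right l)) * S (ry.right j) := by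
            rw [Finset.sum_comm]
        _ = (counit (R := k) (ry.left j) • (1 : H)) * S (ry.right j) := by
            rw [star μ hμ hcr hμc rc (rl j)]
        _ = counit (R := k) (ry.left j) • S (ry.right j) := by
            rw [smul_mul_assoc, one_mul]
    calc ∑ j ∈ ry.index, ∑ l ∈ (rl j).index,
        F ((rl j).left l ⊗ₜ[k] ((rl j).right l ⊗ₜ[k] ry.right j))
        = ∑ j ∈ ry.index, counit (R := k) (ry.left j) • S (ry.right j) :=
          Finset.sum_congr rfl e1
      _ = S (∑ j ∈ ry.index, counit (R := k) (ry.left j) • ry.right j) := by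
          rw [map_sum]; simp only [map_smul]
      _ = S y := by rw [sum_counit_smul ry]
  have rhs : ∑ j ∈ ry.index, ∑ m ∈ (rr j).index,
      F (ry.left j ⊗ₜ[k] ((rr j).left m ⊗ₜ[k] (rr j).right m))
      = ∑ i ∈ rc.index, μ (rc.left i * y) • rc.right i := by
    have e2 : ∀ j ∈ ry.index, ∑ m ∈ (rr j).index,
        F (ry.left j ⊗ₜ[k] ((rr j).left m ⊗ₜ[k] (rr j).right m))
        = ∑ i ∈ rc.index, counit (R := k) (ry.right j) • (μ (rc.left i * ry.left j) • rc.right i) := by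
      intro j _
      calc ∑ m ∈ (rr j).index, F (ry.left j ⊗ₜ[k] ((rr j).left m ⊗ₜ[k] (rr j).right m))
          = ∑ m ∈ (rr j).index, ∑ i ∈ rc.index, μ (rc.left i * ry.left j)
              • (rc.right i * ((rr j).left m * S ((rr j).right m))) :=
            Finset.sum_congr rfl fun m _ => hF _ _ _
        _ = ∑ i ∈ rc.index, μ (rc.left i * ry.left j)
              • (rc.right i * ∑ m ∈ (rr j).index, (rr j).left m * antipode (R := k) ((rr j).right m)) := by
            rw [Finset.sum_comm]
            refine Finset.sum_congr rfl fun i _ => ?_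
            rw [Finset.mul_sum, Finset.smul_sum, hSdef]
        _ = ∑ i ∈ rc.index, μ (rc.left i * ry.left j)
              • (rc.right i * (counit (R := k) (ry.right j) • (1 : H))) := by
            rw [HopfAlgebra.sum_mul_antipode_eq_smul (rr j)]
        _ = ∑ i ∈ rc.index, counit (R := k) (ry.right j) • (μ (rc.left i * ry.left j) • rc.right i) := by
            refine Finset.sum_congr rfl fun i _ => ?_
            rw [mul_smul_comm, mul_one, smul_comm]
    calc ∑ j ∈ ry.index, ∑ m ∈ (rr j).index,
        F (ry.left j ⊗ₜ[k] ((rr j).left m ⊗ₜ[k] (rr j).right m))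
        = ∑ j ∈ ry.index, ∑ i ∈ rc.index,
            counit (R := k) (ry.right j) • (μ (rc.left i * ry.left j) • rc.right i) :=
          Finset.sum_congr rfl e2
      _ = ∑ i ∈ rc.index, ∑ j ∈ ry.index,
            counit (R := k) (ry.right j) • (μ (rc.left i * ry.left j) • rc.right i) :=
          Finset.sum_comm ..
      _ = ∑ i ∈ rc.index, μ (rc.left i * y) • rc.right i := by
          refine Finset.sum_congr rfl fun i _ => ?_
          calc ∑ j ∈ ry.index, counit (R := k) (ry.right j) • (μ (rc.left i * ry.left j) • rc.right i)
              = μ (rc.left i * ∑ j ∈ ry.index, counit (R := k) (ry.right j) • ry.left j) • rc.right i := by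
                rw [Finset.mul_sum, map_sum, Finset.sum_smul]
                refine Finset.sum_congr rfl fun j _ => ?_
                simp [mul_smul_comm, smul_smul]
            _ = μ (rc.left i * y) • rc.right i := by rw [sum_smul_counit ry]
  rw [lhs, rhs] at key
  exact key.symm


lemma antipode_mul_anti (a b : H) :
    antipode (R := k) (a * b) = antipode (R := k) b * antipode (R := k) a := by
  classical
  set S : H →ₗ[k] H := antipode (R := k) (A := H) with hSdef
  let ra : Coalgebra.Repr k a (H × H) := ℛ k a
  let rb : Coalgebra.Repr k b (H × H) := ℛ k b
  let rla : ∀ j : ra.ι, Coalgebra.Repr k (ra.left j) (H × H) := fun j => ℛ k (ra.left j)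
  let rra : ∀ j : ra.ι, Coalgebra.Repr k (ra.right j) (H × H) := fun j => ℛ k (ra.right j)
  let rlb : ∀ i : rb.ι, Coalgebra.Repr k (rb.left i) (H × H) := fun i => ℛ k (rb.left i)
  let rrb : ∀ i : rb.ι, Coalgebra.Repr k (rb.right i) (H × H) := fun i => ℛ k (rb.right i)
  let F1 : (i : rb.ι) → (rrb i).ι → (H ⊗[k] (H ⊗[k] H) →ₗ[k] H) := fun i m =>
    mulLeft k (S (rb.left i)) ∘ₗ LinearMap.mul' k H ∘ₗ rTensor H S
      ∘ₗ lTensor H (LinearMap.mul' k H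
        ∘ₗ TensorProduct.map (mulRight k ((rrb i).left m)) (S ∘ₗ mulRight k ((rrb i).right m)))
  have hF1 : ∀ (i : rb.ι) (m : (rrb i).ι) (x y z : H),
      F1 i m (x ⊗ₜ[k] (y ⊗ₜ[k] z))
      = S (rb.left i) * (S x * ((y * (rrb i).left m) * S (z * (rrb i).right m))) := by
    intro i m x y z
    simp [F1]
  let F2 : H ⊗[k] (H ⊗[k] H) →ₗ[k] H :=
    LinearMap.mul' k H ∘ₗ rTensor H S
      ∘ₗ lTensor H (LinearMap.mul' k H ∘ₗ lTensor H (S ∘ₗ mulLeft k a))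
  have hF2 : ∀ (x y z : H),
      F2 (x ⊗ₜ[k] (y ⊗ₜ[k] z)) = S x * (y * S (a * z)) := by
    intro x y z
    simp [F2]
  -- the common middle expression
  set E : H := ∑ i ∈ rb.index, ∑ m ∈ (rrb i).index, ∑ j ∈ ra.index, ∑ l ∈ (rra j).index,
    S (rb.left i) * (S (ra.left j) * (((rra j).left l * (rrb i).left m)
      * S ((rra j).right l * (rrb i).right m))) with hEdef
  -- Way 1 : E = S (a * b)
  have way1 : E = S (a * b) := by
    have stepA : E = ∑ i ∈ rb.index, ∑ m ∈ (rrb i).index,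
        S (rb.left i) * ((rrb i).left m * S (a * (rrb i).right m)) := by
      rw [hEdef]
      refine Finset.sum_congr rfl fun i _ => Finset.sum_congr rfl fun m _ => ?_
      have tr := (triple_transport (F1 i m) ra rla rra).symm
      calc ∑ j ∈ ra.index, ∑ l ∈ (rra j).index,
          S (rb.left i) * (S (ra.left j) * (((rra j).left l * (rrb i).left m)
            * S ((rra j).right l * (rrb i).right m)))
          = ∑ j ∈ ra.index, ∑ l ∈ (rra j).index,
            F1 i m (ra.left j ⊗ₜ[k] ((rra j).left l ⊗ₜ[k] (rra j).right l)) := by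
            refine Finset.sum_congr rfl fun j _ => Finset.sum_congr rfl fun l _ => ?_
            rw [hF1]
        _ = ∑ j ∈ ra.index, ∑ l ∈ (rla j).index,
            F1 i m ((rla j).left l ⊗ₜ[k] ((rla j).right l ⊗ₜ[k] ra.right j)) := tr
        _ = ∑ j ∈ ra.index, counit (R := k) (ra.left j)
              • (S (rb.left i) * ((rrb i).left m * S (ra.right j * (rrb i).right m))) := by
            refine Finset.sum_congr rfl fun j _ => ?_
            calc ∑ l ∈ (rla j).index,
                F1 i m ((rla j).left l ⊗ₜ[k] ((rla j).right l ⊗ₜ[k] ra.right j))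
                = ∑ l ∈ (rla j).index, S (rb.left i) * ((antipode (R := k) ((rla j).left l)
                    * (rla j).right l) * ((rrb i).left m * S (ra.right j * (rrb i).right m))) := by
                  refine Finset.sum_congr rfl fun l _ => ?_
                  rw [hF1, hSdef]
                  simp only [mul_assoc]
              _ = S (rb.left i) * ((∑ l ∈ (rla j).index, antipode (R := k) ((rla j).left l)
                    * (rla j).right l) * ((rrb i).left m * S (ra.right j * (rrb i).right m))) := by
                  rw [Finset.sum_mul, Finset.mul_sum]
              _ = counit (R := k) (ra.left j)
                    • (S (rb.left i) * ((rrb i).left m * S (ra.right j * (rrb i).right m))) := by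
                  rw [HopfAlgebra.sum_antipode_mul_eq_smul (rla j)]
                  rw [smul_mul_assoc, one_mul, mul_smul_comm]
        _ = S (rb.left i) * ((rrb i).left m * S (a * (rrb i).right m)) := by
            have hL : ∀ w : H, S (rb.left i) * ((rrb i).left m * S (w * (rrb i).right m))
                = (mulLeft k (S (rb.left i)) ∘ₗ mulLeft k ((rrb i).left m) ∘ₗ S
                    ∘ₗ mulRight k ((rrb i).right m)) w := by
              intro w; simp
            simp only [hL, ← map_smul]
            rw [← map_sum, sum_counit_smul ra]
    calc E = ∑ i ∈ rb.index, ∑ m ∈ (rrb i).index,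
        F2 (rb.left i ⊗ₜ[k] ((rrb i).left m ⊗ₜ[k] (rrb i).right m)) := by
          rw [stepA]
          exact Finset.sum_congr rfl fun i _ => Finset.sum_congr rfl fun m _ => (hF2 _ _ _).symm
      _ = ∑ i ∈ rb.index, ∑ l ∈ (rlb i).index,
          F2 ((rlb i).left l ⊗ₜ[k] ((rlb i).right l ⊗ₜ[k] rb.right i)) :=
          (triple_transport F2 rb rlb rrb).symm
      _ = ∑ i ∈ rb.index, counit (R := k) (rb.left i) • S (a * rb.right i) := by
          refine Finset.sum_congr rfl fun i _ => ?_
          calc ∑ l ∈ (rlb i).index,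
              F2 ((rlb i).left l ⊗ₜ[k] ((rlb i).right l ⊗ₜ[k] rb.right i))
              = (∑ l ∈ (rlb i).index, antipode (R := k) ((rlb i).left l) * (rlb i).right l)
                  * S (a * rb.right i) := by
                rw [Finset.sum_mul]
                refine Finset.sum_congr rfl fun l _ => ?_
                rw [hF2, hSdef, mul_assoc]
            _ = counit (R := k) (rb.left i) • S (a * rb.right i) := by
                rw [HopfAlgebra.sum_antipode_mul_eq_smul (rlb i), smul_mul_assoc, one_mul]
      _ = S (a * b) := by
          have hL : ∀ w : H, S (a * w) = (S ∘ₗ mulLeft k a) w := by intro w; simp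
          simp only [hL, ← map_smul]
          rw [← map_sum, sum_counit_smul rb]
  -- Way 2 : E = S b * S a
  have way2 : E = S b * S a := by
    have stepB : E = ∑ i ∈ rb.index, ∑ j ∈ ra.index,
        (counit (R := k) (ra.right j) * counit (R := k) (rb.right i))
          • (S (rb.left i) * S (ra.left j)) := by
      rw [hEdef]
      refine Finset.sum_congr rfl fun i _ => ?_
      rw [Finset.sum_comm]
      refine Finset.sum_congr rfl fun j _ => ?_
      rw [Finset.sum_comm]
      calc ∑ l ∈ (rra j).index, ∑ m ∈ (rrb i).index,
          S (rb.left i) * (S (ra.left j) * (((rra j).left l * (rrb i).left m)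
            * S ((rra j).right l * (rrb i).right m)))
          = S (rb.left i) * (S (ra.left j) * ∑ l ∈ (rra j).index, ∑ m ∈ (rrb i).index,
              (((rra j).left l * (rrb i).left m)
                * antipode (R := k) ((rra j).right l * (rrb i).right m))) := by
            simp only [Finset.mul_sum, hSdef]
        _ = S (rb.left i) * (S (ra.left j)
              * (counit (R := k) (ra.right j * rb.right i) • (1 : H))) := by
            refine congrArg (fun t => S (rb.left i) * (S (ra.left j) * t)) ?_
            calc ∑ l ∈ (rra j).index, ∑ m ∈ (rrb i).index,
                (((rra j).left l * (rrb i).left m)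
                  * antipode (R := k) ((rra j).right l * (rrb i).right m))
                = ∑ p ∈ (reprMul (rra j) (rrb i)).index,
                    (reprMul (rra j) (rrb i)).left p
                      * antipode (R := k) ((reprMul (rra j) (rrb i)).right p) := by
                  simp only [reprMul]
                  rw [Finset.sum_product]
              _ = counit (R := k) (ra.right j * rb.right i) • (1 : H) :=
                  HopfAlgebra.sum_mul_antipode_eq_smul (reprMul (rra j) (rrb i))
        _ = (counit (R := k) (ra.right j) * counit (R := k) (rb.right i))
              • (S (rb.left i) * S (ra.left j)) := by
            rw [Bialgebra.counit_mul, mul_smul_comm, mul_one, mul_smul_comm]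
    rw [stepB]
    calc ∑ i ∈ rb.index, ∑ j ∈ ra.index,
        (counit (R := k) (ra.right j) * counit (R := k) (rb.right i))
          • (S (rb.left i) * S (ra.left j))
        = ∑ i ∈ rb.index, counit (R := k) (rb.right i) • (S (rb.left i) * S a) := by
          refine Finset.sum_congr rfl fun i _ => ?_
          calc ∑ j ∈ ra.index, (counit (R := k) (ra.right j) * counit (R := k) (rb.right i))
              • (S (rb.left i) * S (ra.left j))
              = counit (R := k) (rb.right i) • (S (rb.left i)
                  * ∑ j ∈ ra.index, counit (R := k) (ra.right j) • S (ra.left j)) := by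
                rw [Finset.mul_sum, Finset.smul_sum]
                refine Finset.sum_congr rfl fun j _ => ?_
                rw [mul_smul_comm, smul_smul, mul_comm]
            _ = counit (R := k) (rb.right i) • (S (rb.left i) * S a) := by
                simp only [← map_smul]
                rw [← map_sum, sum_smul_counit ra]
      _ = S b * S a := by
          simp only [← smul_mul_assoc]
          rw [← Finset.sum_mul]
          congr 1
          simp only [← map_smul]
          rw [← map_sum, sum_smul_counit rb]
  rw [way1] at way2
  exact way2


lemma averaging_comm (c : H) (hcl : ∀ x : H, x * c = Coalgebra.counit (R := k) x • c)
    (π : H →ₗ[k] H) {ιc : Type} (rc : Coalgebra.Repr k c ιc) (h m : H) :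
    ∑ i ∈ rc.index, rc.left i * π (antipode (R := k) (rc.right i) * (h * m))
      = h * ∑ i ∈ rc.index, rc.left i * π (antipode (R := k) (rc.right i) * m) := by
  classical
  set S : H →ₗ[k] H := antipode (R := k) (A := H) with hSdef
  let rh : Coalgebra.Repr k h (H × H) := ℛ k h
  let rlh : ∀ j : rh.ι, Coalgebra.Repr k (rh.left j) (H × H) := fun j => ℛ k (rh.left j)
  let rrh : ∀ j : rh.ι, Coalgebra.Repr k (rh.right j) (H × H) := fun j => ℛ k (rh.right j)
  set E : H := ∑ j ∈ rh.index, ∑ l ∈ (rlh j).index, ∑ i ∈ rc.index,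
    ((rlh j).left l * rc.left i)
      * π (S ((rlh j).right l * rc.right i) * (rh.right j * m)) with hEdef
  -- evaluation 1 : E = ∑ i, aᵢ * π (S bᵢ * (h * m))
  have eval1 : E = ∑ i ∈ rc.index, rc.left i * π (S (rc.right i) * (h * m)) := by
    let L : rc.ι → (H →ₗ[k] H) := fun i =>
      mulLeft k (rc.left i) ∘ₗ π ∘ₗ mulLeft k (S (rc.right i)) ∘ₗ mulRight k m
    have hL : ∀ (i : rc.ι) (w : H), L i w = rc.left i * π (S (rc.right i) * (w * m)) := by
      intro i w; simp [L]
    have step1 : ∀ j ∈ rh.index, ∑ l ∈ (rlh j).index, ∑ i ∈ rc.index,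
        ((rlh j).left l * rc.left i)
          * π (S ((rlh j).right l * rc.right i) * (rh.right j * m))
        = counit (R := k) (rh.left j) • ∑ i ∈ rc.index, L i (rh.right j) := by
      intro j _
      let B : H ⊗[k] H →ₗ[k] H :=
        LinearMap.mul' k H ∘ₗ lTensor H (π ∘ₗ mulRight k (rh.right j * m) ∘ₗ S)
      have hB : ∀ x y : H, B (x ⊗ₜ[k] y) = x * π (S y * (rh.right j * m)) := by
        intro x y; simp [B, mul_assoc]
      calc ∑ l ∈ (rlh j).index, ∑ i ∈ rc.index,
          ((rlh j).left l * rc.left i)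
            * π (S ((rlh j).right l * rc.right i) * (rh.right j * m))
          = ∑ l ∈ (rlh j).index, ∑ i ∈ rc.index,
            B (((rlh j).left l * rc.left i) ⊗ₜ[k] ((rlh j).right l * rc.right i)) := by
            exact Finset.sum_congr rfl fun l _ => Finset.sum_congr rfl fun i _ => (hB _ _).symm
        _ = B (Coalgebra.comul (rh.left j * c)) := by
            rw [← (reprMul (rlh j) rc).eq, map_sum]
            simp only [reprMul]
            rw [Finset.sum_product]
        _ = counit (R := k) (rh.left j) • B (Coalgebra.comul c) := by
            rw [hcl, map_smul, map_smul]
        _ = counit (R := k) (rh.left j) • ∑ i ∈ rc.index, L i (rh.right j) := by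
            rw [← rc.eq, map_sum]
            simp only [hB, hL]
    calc E = ∑ j ∈ rh.index, counit (R := k) (rh.left j) • ∑ i ∈ rc.index, L i (rh.right j) :=
          Finset.sum_congr rfl step1
      _ = ∑ i ∈ rc.index, ∑ j ∈ rh.index, counit (R := k) (rh.left j) • L i (rh.right j) := by
          rw [Finset.sum_comm]
          exact Finset.sum_congr rfl fun j _ => Finset.smul_sum
      _ = ∑ i ∈ rc.index, L i h := by
          refine Finset.sum_congr rfl fun i _ => ?_
          simp only [← map_smul]
          rw [← map_sum, sum_counit_smul rh]
      _ = ∑ i ∈ rc.index, rc.left i * π (S (rc.right i) * (h * m)) :=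
          Finset.sum_congr rfl fun i _ => hL i h
  -- evaluation 2 : E = h * ∑ i, aᵢ * π (S bᵢ * m)
  have eval2 : E = h * ∑ i ∈ rc.index, rc.left i * π (S (rc.right i) * m) := by
    let G : rc.ι → (H ⊗[k] (H ⊗[k] H) →ₗ[k] H) := fun i =>
      LinearMap.mul' k H ∘ₗ TensorProduct.map (mulRight k (rc.left i))
        (π ∘ₗ mulLeft k (S (rc.right i)) ∘ₗ LinearMap.mul' k H
          ∘ₗ TensorProduct.map S (mulRight k m))
    have hG : ∀ (i : rc.ι) (x y z : H),
        G i (x ⊗ₜ[k] (y ⊗ₜ[k] z)) = (x * rc.left i) * π (S (rc.right i) * (S y * (z * m))) := by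
      intro i x y z; simp [G]
    have stepE : E = ∑ i ∈ rc.index, ∑ j ∈ rh.index, ∑ l ∈ (rlh j).index,
        G i ((rlh j).left l ⊗ₜ[k] ((rlh j).right l ⊗ₜ[k] rh.right j)) := by
      rw [hEdef]
      calc ∑ j ∈ rh.index, ∑ l ∈ (rlh j).index, ∑ i ∈ rc.index,
          ((rlh j).left l * rc.left i)
            * π (S ((rlh j).right l * rc.right i) * (rh.right j * m))
          = ∑ j ∈ rh.index, ∑ i ∈ rc.index, ∑ l ∈ (rlh j).index,
            ((rlh j).left l * rc.left i)
              * π (S ((rlh j).right l * rc.right i) * (rh.right j * m)) :=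
            Finset.sum_congr rfl fun j _ => Finset.sum_comm ..
        _ = ∑ i ∈ rc.index, ∑ j ∈ rh.index, ∑ l ∈ (rlh j).index,
            ((rlh j).left l * rc.left i)
              * π (S ((rlh j).right l * rc.right i) * (rh.right j * m)) :=
            Finset.sum_comm ..
        _ = ∑ i ∈ rc.index, ∑ j ∈ rh.index, ∑ l ∈ (rlh j).index,
            G i ((rlh j).left l ⊗ₜ[k] ((rlh j).right l ⊗ₜ[k] rh.right j)) := by
            refine Finset.sum_congr rfl fun i _ => Finset.sum_congr rfl fun j _ =>
              Finset.sum_congr rfl fun l _ => ?_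
            rw [hG, hSdef, antipode_mul_anti]
            simp only [mul_assoc]
    calc E = ∑ i ∈ rc.index, ∑ j ∈ rh.index, ∑ l ∈ (rrh j).index,
        G i (rh.left j ⊗ₜ[k] ((rrh j).left l ⊗ₜ[k] (rrh j).right l)) := by
          rw [stepE]
          exact Finset.sum_congr rfl fun i _ => triple_transport (G i) rh rlh rrh
      _ = ∑ i ∈ rc.index, ∑ j ∈ rh.index, counit (R := k) (rh.right j)
            • ((rh.left j * rc.left i) * π (S (rc.right i) * m)) := by
          refine Finset.sum_congr rfl fun i _ => Finset.sum_congr rfl fun j _ => ?_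
          let K : H →ₗ[k] H := mulLeft k (rh.left j * rc.left i) ∘ₗ π
            ∘ₗ mulLeft k (S (rc.right i)) ∘ₗ mulRight k m
          calc ∑ l ∈ (rrh j).index, G i (rh.left j ⊗ₜ[k] ((rrh j).left l ⊗ₜ[k] (rrh j).right l))
              = ∑ l ∈ (rrh j).index, K (antipode (R := k) ((rrh j).left l) * (rrh j).right l) := by
                refine Finset.sum_congr rfl fun l _ => ?_
                rw [hG, hSdef]
                simp [K, mul_assoc, hSdef]
            _ = K (counit (R := k) (rh.right j) • (1 : H)) := by
                rw [← map_sum, HopfAlgebra.sum_antipode_mul_eq_smul (rrh j)]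
            _ = counit (R := k) (rh.right j) • ((rh.left j * rc.left i) * π (S (rc.right i) * m)) := by
                rw [map_smul]
                simp [K, mul_assoc]
      _ = h * ∑ i ∈ rc.index, rc.left i * π (S (rc.right i) * m) := by
          rw [Finset.mul_sum]
          refine Finset.sum_congr rfl fun i _ => ?_
          have hLi : ∀ w : H, (w * rc.left i) * π (S (rc.right i) * m)
              = mulRight k (rc.left i * π (S (rc.right i) * m)) w := by
            intro w; simp [mul_assoc]
          simp only [hLi, ← map_smul]
          rw [← map_sum, sum_smul_counit rh]
          simp [mul_assoc]
  rw [eval1] at eval2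
  exact eval2


lemma antipode_grouplike (g gi : H) (hggi : g * gi = 1)
    (hgrp : Coalgebra.comul (R := k) g = g ⊗ₜ[k] g)
    (hge : Coalgebra.counit (R := k) g = (1 : k)) :
    antipode (R := k) g = gi := by
  let rg : Coalgebra.Repr k g Unit :=
    { index := Finset.univ, left := fun _ => g, right := fun _ => g,
      eq := by simp [hgrp] }
  have h := HopfAlgebra.sum_antipode_mul_eq_smul rg
  simp only [rg, hge, one_smul, Finset.univ_unique, Finset.sum_singleton] at h
  calc antipode (R := k) g = antipode (R := k) g * (g * gi) := by rw [hggi, mul_one]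
    _ = (antipode (R := k) g * g) * gi := by rw [mul_assoc]
    _ = gi := by rw [h, one_mul]

lemma traceFormula [FiniteDimensional k H] (μ : H →ₗ[k] k)
    (hμ : ∀ x : H,
      TensorProduct.lid k H (LinearMap.rTensor H μ (Coalgebra.comul x)) = μ x • (1 : H))
    {c : H} (hcr : ∀ x : H, c * x = Coalgebra.counit (R := k) x • c) (hμc : μ c = 1)
    (g gi : H) (hggi : g * gi = 1) (hgig : gi * g = 1)
    (hgrp : Coalgebra.comul (R := k) g = g ⊗ₜ[k] g)
    (hge : Coalgebra.counit (R := k) g = (1 : k))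
    (hpiv : ∀ x : H,
      HopfAlgebra.antipode (R := k) (HopfAlgebra.antipode (R := k) x) = g * x * gi)
    (x : H) :
    LinearMap.trace k H (LinearMap.mulLeft k g ∘ₗ LinearMap.mulRight k x)
      = Coalgebra.counit (R := k) c * μ (g * x) := by
  classical
  set S : H →ₗ[k] H := antipode (R := k) (A := H) with hSdef
  have hggi' : ∀ w : H, g * (gi * w) = w := fun w => by rw [← mul_assoc, hggi, one_mul]
  have hgig' : ∀ w : H, gi * (g * w) = w := fun w => by rw [← mul_assoc, hgig, one_mul]
  let rc : Coalgebra.Repr k c (H × H) := ℛ k c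
  have hA := claimA μ hμ hcr hμc rc
  let L : H →ₗ[k] H := mulLeft k gi ∘ₗ mulRight k g ∘ₗ S
  have hLdef : ∀ w : H, L w = gi * (S w * g) := fun w => by simp [L]
  have hA2 : ∀ z : H, ∑ i ∈ rc.index, μ (rc.left i * z) • L (rc.right i) = z := by
    intro z
    have h1 := congrArg L (hA z)
    rw [map_sum] at h1
    simp only [map_smul] at h1
    rw [h1, hLdef]
    rw [hSdef, hpiv]
    calc gi * ((g * z * gi) * g) = gi * (g * (z * (gi * g))) := by simp only [mul_assoc]
      _ = z := by rw [hgig, mul_one, hgig']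
  let t : Module.Dual k H ⊗[k] H :=
    ∑ i ∈ rc.index, (μ ∘ₗ mulLeft k (rc.left i)) ⊗ₜ[k] (S (rc.right i) * (g * x))
  have hf : LinearMap.mulLeft k g ∘ₗ LinearMap.mulRight k x = dualTensorHom k H H t := by
    apply LinearMap.ext; intro z
    have hz := hA2 z
    calc (LinearMap.mulLeft k g ∘ₗ LinearMap.mulRight k x) z = g * (z * x) := by
          simp [mul_assoc]
      _ = g * ((∑ i ∈ rc.index, μ (rc.left i * z) • L (rc.right i)) * x) := by rw [hz]
      _ = ∑ i ∈ rc.index, μ (rc.left i * z) • (S (rc.right i) * (g * x)) := by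
          rw [Finset.sum_mul, Finset.mul_sum]
          refine Finset.sum_congr rfl fun i _ => ?_
          rw [smul_mul_assoc, mul_smul_comm]
          congr 1
          rw [hLdef]
          simp only [mul_assoc, hggi']
      _ = dualTensorHom k H H t z := by
          simp [t, map_sum, LinearMap.sum_apply, dualTensorHom_apply]
  rw [hf, LinearMap.trace_eq_contract_apply]
  have : contractLeft k H t
      = ∑ i ∈ rc.index, μ (rc.left i * (S (rc.right i) * (g * x))) := by
    simp [t, map_sum, contractLeft_apply]
  rw [this]
  calc ∑ i ∈ rc.index, μ (rc.left i * (S (rc.right i) * (g * x)))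
      = μ ((∑ i ∈ rc.index, rc.left i * antipode (R := k) (rc.right i)) * (g * x)) := by
        rw [Finset.sum_mul, map_sum]
        refine Finset.sum_congr rfl fun i _ => ?_
        rw [hSdef, mul_assoc]
    _ = μ ((Coalgebra.counit (R := k) c • (1 : H)) * (g * x)) := by
        rw [HopfAlgebra.sum_mul_antipode_eq_smul rc]
    _ = Coalgebra.counit (R := k) c * μ (g * x) := by
        rw [smul_mul_assoc, one_mul, map_smul, smul_eq_mul]

lemma semisimple_of_counit_ne {c : H}
    (hcl : ∀ x : H, x * c = Coalgebra.counit (R := k) x • c)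
    (hc : Coalgebra.counit (R := k) c ≠ 0) : IsSemisimpleRing H := by
  classical
  refine (isSemisimpleModule_iff H H).2 ⟨?_⟩
  intro N
  obtain ⟨P, hP⟩ := Submodule.exists_isCompl (N.restrictScalars k)
  let π : H →ₗ[k] H :=
    (N.restrictScalars k).subtype ∘ₗ (N.restrictScalars k).linearProjOfIsCompl P hP
  have hπmem : ∀ m' : H, π m' ∈ N := fun m' =>
    ((N.restrictScalars k).linearProjOfIsCompl P hP m').2
  have hπid : ∀ n ∈ N, π n = n := by
    intro n hn
    have h := Submodule.linearProjOfIsCompl_apply_left hP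
      (⟨n, hn⟩ : N.restrictScalars k)
    simp only [π, LinearMap.coe_comp, Function.comp_apply]
    exact congrArg Subtype.val h
  let rc : Coalgebra.Repr k c (H × H) := ℛ k c
  let p1 : H →ₗ[k] H := ∑ i ∈ rc.index,
    mulLeft k (rc.left i) ∘ₗ π ∘ₗ mulLeft k (antipode (R := k) (rc.right i))
  have hp1 : ∀ m : H, p1 m
      = ∑ i ∈ rc.index, rc.left i * π (antipode (R := k) (rc.right i) * m) := by
    intro m; simp [p1, LinearMap.sum_apply]
  have hcomm : ∀ h m : H, p1 (h * m) = h * p1 m := by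
    intro h m; rw [hp1, hp1]; exact averaging_comm c hcl π rc h m
  have hmem : ∀ m : H, p1 m ∈ N := by
    intro m
    rw [hp1]
    refine Submodule.sum_mem _ fun i _ => ?_
    rw [← smul_eq_mul]
    exact N.smul_mem _ (hπmem _)
  have hid : ∀ n ∈ N, p1 n = Coalgebra.counit (R := k) c • n := by
    intro n hn
    rw [hp1]
    have h1 : ∀ i ∈ rc.index, rc.left i * π (antipode (R := k) (rc.right i) * n)
        = (rc.left i * antipode (R := k) (rc.right i)) * n := by
      intro i _
      have hmem2 : antipode (R := k) (rc.right i) * n ∈ N := by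
        rw [← smul_eq_mul]; exact N.smul_mem _ hn
      rw [hπid _ hmem2, mul_assoc]
    rw [Finset.sum_congr rfl h1, ← Finset.sum_mul,
      HopfAlgebra.sum_mul_antipode_eq_smul rc, smul_mul_assoc, one_mul]
  let q : H →ₗ[H] H :=
    { toFun := fun m => (Coalgebra.counit (R := k) c)⁻¹ • p1 m
      map_add' := by intro m1 m2; simp only [map_add, smul_add]
      map_smul' := by
        intro h m
        simp only [RingHom.id_apply, smul_eq_mul, hcomm]
        rw [mul_smul_comm] }
  have hqmem : ∀ m : H, q m ∈ N := by
    intro m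
    show (Coalgebra.counit (R := k) c)⁻¹ • p1 m ∈ N
    rw [← algebraMap_smul H ((Coalgebra.counit (R := k) c)⁻¹) (p1 m)]
    exact N.smul_mem _ (hmem m)
  have hqid : ∀ n ∈ N, q n = n := by
    intro n hn
    show (Coalgebra.counit (R := k) c)⁻¹ • p1 n = n
    rw [hid n hn, smul_smul, inv_mul_cancel₀ hc, one_smul]
  refine ⟨LinearMap.ker q, ?_, ?_⟩
  · refine Submodule.disjoint_def.2 fun x hxN hxK => ?_
    have := hqid x hxN
    rw [LinearMap.mem_ker.1 hxK] at this
    exact this.symm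
  · rw [codisjoint_iff, eq_top_iff]
    intro m _
    have hker : m - q m ∈ LinearMap.ker q := by
      rw [LinearMap.mem_ker, map_sub, hqid (q m) (hqmem m), sub_self]
    exact Submodule.mem_sup.2 ⟨q m, hqmem m, m - q m, hker, by abel⟩


lemma counit_ne_of_semisimple (μ : H →ₗ[k] k) {c : H}
    (hcr : ∀ x : H, c * x = Coalgebra.counit (R := k) x • c) (hμc : μ c = 1)
    (hss : IsSemisimpleRing H) : Coalgebra.counit (R := k) c ≠ 0 := by
  intro h0
  haveI := hss
  set N : Submodule H H := Submodule.span H {c} with hN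
  obtain ⟨P, hP⟩ := ComplementedLattice.exists_isCompl N
  have h1 : (1 : H) ∈ N ⊔ P := by rw [hP.codisjoint.eq_top]; trivial
  obtain ⟨u, hu, v, hv, huv⟩ := Submodule.mem_sup.1 h1
  obtain ⟨h, hh⟩ := Submodule.mem_span_singleton.1 hu
  have hcu : c * u = 0 := by
    rw [← hh, smul_eq_mul, hcr, Bialgebra.counit_mul, h0, mul_zero, zero_smul]
  have hcv : c * v ∈ P := by
    rw [← smul_eq_mul]; exact P.smul_mem _ hv
  have hcP : c ∈ P := by
    have : c = c * u + c * v := by rw [← mul_add, huv, mul_one]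
    rw [hcu, zero_add] at this
    rw [this]; exact hcv
  have hcN : c ∈ N := Submodule.subset_span rfl
  have hc0 : c = 0 := Submodule.disjoint_def.1 hP.disjoint c hcN hcP
  rw [hc0, map_zero] at hμc
  exact zero_ne_one hμc

end Stmt18Aux

open Stmt18Aux in
/-- Proposition 1.2 (right case): for a finite-dimensional unimodular pivotal Hopf algebra
`(H, g)` with right integral `μ` and two-sided cointegral `c` normalised by `μ(c) = 1`, the
quantum trace of the endomorphism `l_g ∘ r_x` of the regular representation equals
`ε(c) · μ(g x)`; in particular the quantum trace on the regular representation vanishes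
identically if and only if `H` is not semisimple. -/
theorem stmt18 (k H : Type) [Field k] [Ring H] [HopfAlgebra k H] [FiniteDimensional k H]
    (μ : H →ₗ[k] k)
    (hμ : ∀ x : H,
      TensorProduct.lid k H (LinearMap.rTensor H μ (Coalgebra.comul x)) = μ x • (1 : H))
    (c : H)
    (hcl : ∀ x : H, x * c = Coalgebra.counit (R := k) x • c)
    (hcr : ∀ x : H, c * x = Coalgebra.counit (R := k) x • c)
    (hμc : μ c = 1)
    (g gi : H) (hggi : g * gi = 1) (hgig : gi * g = 1)
    (hgrp : Coalgebra.comul (R := k) g = g ⊗ₜ[k] g)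
    (hge : Coalgebra.counit (R := k) g = (1 : k))
    (hpiv : ∀ x : H,
      HopfAlgebra.antipode (R := k) (HopfAlgebra.antipode (R := k) x) = g * x * gi) :
    (∀ x : H,
      LinearMap.trace k H (LinearMap.mulLeft k g ∘ₗ LinearMap.mulRight k x) =
        Coalgebra.counit (R := k) c * μ (g * x)) ∧
    ((∀ x : H,
        LinearMap.trace k H (LinearMap.mulLeft k g ∘ₗ LinearMap.mulRight k x) = 0) ↔
      ¬ IsSemisimpleRing H) := by
  have tf : ∀ x : H,
      LinearMap.trace k H (LinearMap.mulLeft k g ∘ₗ LinearMap.mulRight k x) =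
        Coalgebra.counit (R := k) c * μ (g * x) :=
    fun x => traceFormula μ hμ hcr hμc g gi hggi hgig hgrp hge hpiv x
  refine ⟨tf, ?_, ?_⟩
  · intro hall hss
    have h1 := tf (gi * c)
    rw [hall (gi * c)] at h1
    have h2 : g * (gi * c) = c := by rw [← mul_assoc, hggi, one_mul]
    rw [h2, hμc, mul_one] at h1
    exact counit_ne_of_semisimple μ hcr hμc hss h1.symm
  · intro hnss x
    rw [tf x]
    have h0 : Coalgebra.counit (R := k) c = 0 := by
      by_contra hne
      exact hnss (semisimple_of_counit_ne hcl hne)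
    rw [h0, zero_mul]
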